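/- Let A be a Latin square of order n, let r ≠ s be two distinct rows, let π_{r,s} be the permutation of {1,…,n} with π_{r,s}(A_{r,i}) = A_{s,i} for all i, and let C ⊆ {1,…,n} be the set of columns involved in one cycle of π_{r,s} (i.e., C = {i : A_{r,i} belongs to a fixed chosen cycle of π_{r,s}}). Then the array A' defined by A'_{r,j} = A_{s,j} for j ∈ C, A'_{s,j} = A_{r,j} for j ∈ C, and A'_{i,j} = A_{i,j} otherwise, is a Latin square of order n. -/

import Mathlib

/-- A Latin square of order `n`: each symbol occurs exactly once in each row
and exactly once in each column. -/
def IsLatinSquare {n : ℕ} (A : Fin n → Fin n → Fin n) : Prop :=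
  (∀ i, Function.Bijective fun j => A i j) ∧ (∀ j, Function.Bijective fun i => A i j)

theorem row_cycle_switch (n : ℕ) (A : Fin n → Fin n → Fin n) (hA : IsLatinSquare A)
    (r s : Fin n) (hrs : r ≠ s) (π : Equiv.Perm (Fin n))
    (hπ : ∀ i : Fin n, π (A r i) = A s i)
    (x : Fin n) (C : Finset (Fin n))
    (hC : ∀ j : Fin n, j ∈ C ↔ π.SameCycle x (A r j)) :
    IsLatinSquare (fun i j =>
      if i = r ∧ j ∈ C then A s j
      else if i = s ∧ j ∈ C then A r j
      else A i j) := by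
  classical
  obtain ⟨hrow, hcol⟩ := hA
  -- σ : apply π on the cycle of x, identity elsewhere; injective
  have hσ : Function.Injective (fun y => if π.SameCycle x y then π y else y) := by
    intro a b hab
    simp only at hab
    by_cases ha : π.SameCycle x a <;> by_cases hb : π.SameCycle x b <;>
      simp only [ha, hb, if_pos, if_neg, if_true, if_false] at hab
    · exact π.injective hab
    · exact absurd (hab ▸ ha.apply_right) hb
    · exact absurd (hab ▸ hb.apply_right) ha
    · exact hab
  have hτ : Function.Injective (fun y => if π.SameCycle x y then π⁻¹ y else y) := by
    intro a b hab
    simp only at hab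
    by_cases ha : π.SameCycle x a <;> by_cases hb : π.SameCycle x b <;>
      simp only [ha, hb, if_pos, if_neg, if_true, if_false] at hab
    · exact π⁻¹.injective hab
    · exact absurd (hab ▸ (Equiv.Perm.sameCycle_symm_apply_right.mpr ha : π.SameCycle x (π⁻¹ a))) hb
    · exact absurd (hab ▸ (Equiv.Perm.sameCycle_symm_apply_right.mpr hb : π.SameCycle x (π⁻¹ b))) ha
    · exact hab
  have key : ∀ j, (j ∈ C ↔ π.SameCycle x (A s j)) := by
    intro j
    rw [hC, ← hπ j, Equiv.Perm.sameCycle_apply_right]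
  constructor
  · intro i
    rw [← Finite.injective_iff_bijective]
    by_cases hir : i = r
    · have e : (fun j => if i = r ∧ j ∈ C then A s j
          else if i = s ∧ j ∈ C then A r j else A i j)
          = (fun y => if π.SameCycle x y then π y else y) ∘ (fun j => A r j) := by
        funext j
        by_cases hj : j ∈ C
        · simp only [Function.comp_apply, hir, hj, and_true, if_true,
            if_pos ((hC j).mp hj), hπ j]
        · simp only [Function.comp_apply, hir, hj, and_false, if_false,
            if_neg (fun h => hj ((hC j).mpr h))]
      rw [e]
      exact hσ.comp (hrow r).injective
    · by_cases his : i = s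
      · have e : (fun j => if i = r ∧ j ∈ C then A s j
            else if i = s ∧ j ∈ C then A r j else A i j)
            = (fun y => if π.SameCycle x y then π⁻¹ y else y) ∘ (fun j => A s j) := by
          funext j
          by_cases hj : j ∈ C
          · have h1 : A r j = π⁻¹ (A s j) := by rw [← hπ j]; simp
            simp only [Function.comp_apply]
            rw [if_neg (fun h : i = r ∧ j ∈ C => hir h.1), if_pos ⟨his, hj⟩,
              if_pos ((key j).mp hj), h1]
          · simp only [Function.comp_apply, his, hj, and_false, if_false,
              if_neg (fun h => hj ((key j).mpr h))]
        rw [e]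
        exact hτ.comp (hrow s).injective
      · have e : (fun j => if i = r ∧ j ∈ C then A s j
            else if i = s ∧ j ∈ C then A r j else A i j) = fun j => A i j := by
          funext j; simp [hir, his]
        rw [e]
        exact (hrow i).injective
  · intro j
    by_cases hj : j ∈ C
    · have e : (fun i => if i = r ∧ j ∈ C then A s j
          else if i = s ∧ j ∈ C then A r j else A i j)
          = (fun i => A i j) ∘ (Equiv.swap r s) := by
        funext i
        by_cases hir : i = r
        · simp [hir, hj, Equiv.swap_apply_left, Ne.symm hrs]
        · by_cases his : i = s
          · simp [his, hir, hj, Equiv.swap_apply_right, Ne.symm hrs]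
          · simp [hir, his, Equiv.swap_apply_of_ne_of_ne hir his]
      rw [e]
      exact (hcol j).comp (Equiv.swap r s).bijective
    · have e : (fun i => if i = r ∧ j ∈ C then A s j
          else if i = s ∧ j ∈ C then A r j else A i j) = fun i => A i j := by
        funext i; simp [hj]
      rw [e]
      exact hcol j
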